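/- The min_pars lower bound can be strict: there exist two transitions R₁ = (∅, {p(a)}) and R₂ = ({p(a),p(b)}, {p(b)}) over a unary predicate p and two objects a, b such that no lifted action with one parameter explains both transitions, but some lifted action with two parameters does. -/

import Mathlib

/-- A unary predicate `p` applied to an object is identified with the object itself;
a lifted action with `k` parameters over `p` has pre/add/del sets of lifted facts `p(xᵢ)`,
identified with elements of `Fin k`. It explains a transition `(S_b, S_a)` via `σ`
iff `pre·σ ⊆ S_b` and `S_a = (S_b \ del·σ) ∪ add·σ`. -/
def Explains {O : Type*} [DecidableEq O] {k : ℕ}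
    (pre add del : Finset (Fin k)) (σ : Fin k → O)
    (Sb Sa : Finset O) : Prop :=
  pre.image σ ⊆ Sb ∧ Sa = (Sb \ del.image σ) ∪ add.image σ

theorem stmt6 {O : Type*} [DecidableEq O] (a b : O) (hab : a ≠ b) :
    (¬ ∃ (pre add del : Finset (Fin 1)) (σ₁ σ₂ : Fin 1 → O),
        Explains pre add del σ₁ (∅ : Finset O) {a} ∧
        Explains pre add del σ₂ ({a, b} : Finset O) {b}) ∧
    (∃ (pre add del : Finset (Fin 2)) (σ₁ σ₂ : Fin 2 → O),
        Explains pre add del σ₁ (∅ : Finset O) {a} ∧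
        Explains pre add del σ₂ ({a, b} : Finset O) {b}) := by
  constructor
  · rintro ⟨pre, add, del, σ₁, σ₂, ⟨-, h1⟩, ⟨-, h2⟩⟩
    -- add must be nonempty, since {a} = ∅ ∪ add.image σ₁
    have haddne : add.Nonempty := by
      rcases add.eq_empty_or_nonempty with h | h
      · simp [h] at h1
      · exact h
    have hadd : add = {0} := by
      ext i; fin_cases i; simp [Finset.eq_singleton_iff_nonempty_unique_mem.mpr
        ⟨haddne, fun x _ => Subsingleton.elim x 0⟩]
    -- σ₂ 0 = b
    have hmem : σ₂ 0 ∈ ({b} : Finset O) := by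
      rw [h2]; apply Finset.mem_union_right
      simp [hadd]
    have hσ2 : σ₂ 0 = b := by simpa using hmem
    -- a ∈ {a,b} \ del.image σ₂ ⊆ {b}
    have ha : a ∈ ({b} : Finset O) := by
      rw [h2]
      apply Finset.mem_union_left
      rw [Finset.mem_sdiff]
      refine ⟨by simp, ?_⟩
      intro hd
      rw [Finset.mem_image] at hd
      obtain ⟨i, -, hi⟩ := hd
      have : i = 0 := Subsingleton.elim _ _
      rw [this, hσ2] at hi
      exact hab hi.symm
    exact hab (by simpa using ha)
  · refine ⟨∅, {0}, {1}, ![a, a], ![b, a], ⟨by simp, ?_⟩, ⟨by simp, ?_⟩⟩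
    · simp
    · ext x
      simp [Finset.mem_sdiff, hab, hab.symm]
      constructor
      · rintro rfl; exact ⟨Or.inr rfl, hab.symm⟩
      · rintro ⟨h | h, h'⟩
        · exact absurd h h'
        · exact h
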